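/- arXiv:2305.07088 — 3 statements merged into one kernel-verified Lean document; each statement's English description precedes it below -/
import Mathlib

section
/- Fix ρ₀ ≥ 0. The function z_{ρ₀} : ℝ → ℝ, z_{ρ₀}(y) = (Φ')₊⁻¹(y + Φ'(ρ₀)) − ρ₀, is continuously differentiable on ℝ, with z_{ρ₀}'(y) = 1/Φ''(z_{ρ₀}(y) + ρ₀) for y > −Φ'(ρ₀) and z_{ρ₀}'(y) = 0 for y ≤ −Φ'(ρ₀); in particular lim_{y→(−Φ'(ρ₀))⁺} z_{ρ₀}'(y) = 0. -/
open MeasureTheory Filter Set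

open scoped Topology ENNReal

/-- Enthalpy derivative `Φ'(ρ) = ∫₀^ρ P'(s)/s ds`. -/
noncomputable def PhiD (P' : ℝ → ℝ) (ρ : ℝ) : ℝ := ∫ s in Set.Ioc (0:ℝ) ρ, P' s / s

set_option linter.unusedVariables false
set_option linter.unusedSectionVars false

lemma auxInt (P' : ℝ → ℝ)
    (hP'cont : ContinuousOn P' (Set.Ioi 0))
    (hP'pos : ∀ s, 0 < s → 0 < P' s)
    (γ₀ K₀ : ℝ) (hγ₀ : γ₀ ∈ Set.Ioo (6/5 : ℝ) 2) (hK₀ : 0 < K₀)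
    (hlim₀ : Filter.Tendsto (fun s => s ^ (1 - γ₀) * P' s) (nhdsWithin 0 (Set.Ioi 0)) (nhds K₀)) :
    ∀ ρ : ℝ, IntegrableOn (fun s => P' s / s) (Set.Ioc 0 ρ) := by
  have hcont : ContinuousOn (fun s => P' s / s) (Set.Ioi 0) :=
    hP'cont.div (continuousOn_id) (fun x hx => ne_of_gt hx)
  have hev : ∀ᶠ s in nhdsWithin 0 (Set.Ioi 0), s ^ (1 - γ₀) * P' s < K₀ + 1 :=
    hlim₀.eventually (eventually_lt_nhds (lt_add_one K₀))
  obtain ⟨δ, hδ, hsub⟩ := mem_nhdsGT_iff_exists_Ioc_subset.1 hev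
  have hδ0 : (0:ℝ) < δ := hδ
  have hbound : ∀ s ∈ Set.Ioc (0:ℝ) δ, ‖P' s / s‖ ≤ (K₀ + 1) * s ^ (γ₀ - 2) := by
    intro s hs
    have hs0 : (0:ℝ) < s := hs.1
    have h1 : s ^ (1 - γ₀) * P' s ≤ K₀ + 1 := (hsub hs).le
    have hss : s ^ (γ₀ - 1) * s ^ (1 - γ₀) = 1 := by
      rw [← Real.rpow_add hs0]; norm_num
    have h2 : P' s ≤ (K₀ + 1) * s ^ (γ₀ - 1) := by
      calc P' s = s ^ (γ₀ - 1) * (s ^ (1 - γ₀) * P' s) := by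
                  rw [← mul_assoc, hss, one_mul]
        _ ≤ s ^ (γ₀ - 1) * (K₀ + 1) :=
            mul_le_mul_of_nonneg_left h1 (le_of_lt (Real.rpow_pos_of_pos hs0 (γ₀ - 1)))
        _ = (K₀ + 1) * s ^ (γ₀ - 1) := mul_comm _ _
    have hnn : 0 ≤ P' s / s := le_of_lt (div_pos (hP'pos s hs0) hs0)
    rw [Real.norm_of_nonneg hnn]
    have h3 : s ^ (γ₀ - 1) / s = s ^ (γ₀ - 2) := by
      have := Real.rpow_sub hs0 (γ₀ - 1) 1
      rw [Real.rpow_one] at this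
      rw [← this]; ring_nf
    calc P' s / s ≤ (K₀ + 1) * s ^ (γ₀ - 1) / s := by gcongr
      _ = (K₀ + 1) * s ^ (γ₀ - 2) := by rw [mul_div_assoc, h3]
  have hmeas : ∀ ρ : ℝ, AEStronglyMeasurable (fun s => P' s / s) (volume.restrict (Set.Ioc (0:ℝ) ρ)) := by
    intro ρ
    exact (hcont.mono Set.Ioc_subset_Ioi_self).aestronglyMeasurable measurableSet_Ioc
  have hrpow : IntegrableOn (fun s : ℝ => (K₀ + 1) * s ^ (γ₀ - 2)) (Set.Ioc 0 δ) := by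
    have : IntervalIntegrable (fun s : ℝ => s ^ (γ₀ - 2)) volume 0 δ := by
      apply intervalIntegral.intervalIntegrable_rpow'
      have := hγ₀.1; linarith [hγ₀.1]
    have h := (intervalIntegrable_iff_integrableOn_Ioc_of_le hδ0.le).1 this
    exact h.const_mul _
  have hIδ : IntegrableOn (fun s => P' s / s) (Set.Ioc 0 δ) := by
    apply Integrable.mono' hrpow (hmeas δ)
    exact (ae_restrict_iff' measurableSet_Ioc).2 (Filter.Eventually.of_forall hbound)
  intro ρ
  rcases le_or_gt ρ δ with h | h
  · exact hIδ.mono_set (Set.Ioc_subset_Ioc_right h)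
  · have h2 : IntegrableOn (fun s => P' s / s) (Set.Ioc δ ρ) := by
      have : IntegrableOn (fun s => P' s / s) (Set.Icc δ ρ) :=
        (hcont.mono (fun x hx => lt_of_lt_of_le hδ0 hx.1)).integrableOn_Icc
      exact this.mono_set Set.Ioc_subset_Icc_self
    have : Set.Ioc (0:ℝ) ρ = Set.Ioc 0 δ ∪ Set.Ioc δ ρ := (Set.Ioc_union_Ioc_eq_Ioc hδ0.le h.le).symm
    rw [this]
    exact hIδ.union h2



lemma auxMono (P' : ℝ → ℝ)
    (hP'cont : ContinuousOn P' (Set.Ioi 0))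
    (hP'pos : ∀ s, 0 < s → 0 < P' s)
    (hint : ∀ ρ : ℝ, IntegrableOn (fun s => P' s / s) (Set.Ioc 0 ρ)) :
    StrictMonoOn (PhiD P') (Set.Ici 0) := by
  intro a ha b hb hab
  have hsplit : Set.Ioc (0:ℝ) b = Set.Ioc 0 a ∪ Set.Ioc a b :=
    (Set.Ioc_union_Ioc_eq_Ioc ha hab.le).symm
  have hia : IntegrableOn (fun s => P' s / s) (Set.Ioc 0 a) := hint a
  have hiab : IntegrableOn (fun s => P' s / s) (Set.Ioc a b) :=
    (hint b).mono_set (fun x hx => ⟨lt_of_le_of_lt ha hx.1, hx.2⟩)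
  have hdisj : Disjoint (Set.Ioc (0:ℝ) a) (Set.Ioc a b) := Set.Ioc_disjoint_Ioc_of_le le_rfl
  have heq : PhiD P' b = PhiD P' a + ∫ s in Set.Ioc a b, P' s / s := by
    unfold PhiD
    rw [hsplit, setIntegral_union hdisj measurableSet_Ioc hia hiab]
  have hpos : 0 < ∫ s in Set.Ioc a b, P' s / s := by
    rw [setIntegral_pos_iff_support_of_nonneg_ae]
    · have : Set.Ioc a b ⊆ Function.support (fun s => P' s / s) := by
        intro x hx
        have hx0 : 0 < x := lt_of_le_of_lt ha hx.1
        exact ne_of_gt (div_pos (hP'pos x hx0) hx0)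
      calc (0:ENNReal) < volume (Set.Ioc a b) := by
              rw [Real.volume_Ioc]; simpa using hab
        _ ≤ volume (Function.support (fun s => P' s / s) ∩ Set.Ioc a b) := by
              rw [Set.inter_eq_right.2 this]
    · refine (ae_restrict_iff' measurableSet_Ioc).2 (Filter.Eventually.of_forall ?_)
      intro x hx
      have hx0 : 0 < x := lt_of_le_of_lt ha hx.1
      exact le_of_lt (div_pos (hP'pos x hx0) hx0)
    · exact hiab
  linarith [heq, hpos]



lemma auxPhiNonneg (P' : ℝ → ℝ) (hP'pos : ∀ s, 0 < s → 0 < P' s) (x : ℝ) :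
    0 ≤ PhiD P' x := by
  apply setIntegral_nonneg measurableSet_Ioc
  intro s hs
  exact le_of_lt (div_pos (hP'pos s hs.1) hs.1)

section
variable (P' : ℝ → ℝ) (invPhi : ℝ → ℝ)
variable (hP'pos : ∀ s, 0 < s → 0 < P' s)
variable (hsm : StrictMonoOn (PhiD P') (Set.Ici 0))
variable (hinv0 : ∀ y ≤ (0:ℝ), invPhi y = 0)
variable (hinv : ∀ y, 0 ≤ y → 0 ≤ invPhi y ∧ PhiD P' (invPhi y) = y)

include hinv0 hinv in
lemma auxGnonneg : ∀ y, 0 ≤ invPhi y := by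
  intro y
  rcases le_or_gt y 0 with h | h
  · rw [hinv0 y h]
  · exact (hinv y h.le).1

include hP'pos hsm hinv0 hinv in
lemma auxGF : ∀ x, 0 ≤ x → invPhi (PhiD P' x) = x := by
  intro x hx
  have hfx : 0 ≤ PhiD P' x := auxPhiNonneg P' hP'pos x
  have h1 := hinv (PhiD P' x) hfx
  exact hsm.injOn h1.1 hx h1.2

include hP'pos hsm hinv0 hinv in
lemma auxGpos : ∀ y, 0 < y → 0 < invPhi y := by
  intro y hy
  rcases (hinv y hy.le).1.lt_or_eq with h | h
  · exact h
  · exfalso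
    have := (hinv y hy.le).2
    rw [← h] at this
    have h0 : PhiD P' 0 = 0 := by
      unfold PhiD; simp
    rw [h0] at this; linarith
include hP'pos hsm hinv0 hinv in
lemma auxGMono : Monotone invPhi := by
  intro a b hab
  rcases le_or_gt b 0 with hb | hb
  · rw [hinv0 a (hab.trans hb), hinv0 b hb]
  rcases le_or_gt a 0 with ha | ha
  · rw [hinv0 a ha]; exact (hinv b hb.le).1
  by_contra h
  push_neg at h
  have h2 : PhiD P' (invPhi b) < PhiD P' (invPhi a) :=
    hsm (hinv b hb.le).1 (hinv a ha.le).1 h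
  rw [(hinv a ha.le).2, (hinv b hb.le).2] at h2
  exact absurd hab (not_le.2 h2)

include hP'pos hsm hinv0 hinv in
lemma auxGCont : Continuous invPhi := by
  have hmono := auxGMono P' invPhi hP'pos hsm hinv0 hinv
  have hgnn := auxGnonneg P' invPhi hinv0 hinv
  have hgf := auxGF P' invPhi hP'pos hsm hinv0 hinv
  rw [continuous_iff_continuousAt]
  intro a
  rcases lt_trichotomy a 0 with ha | ha | ha
  · -- locally constant 0
    have : ∀ᶠ x in nhds a, invPhi x = 0 := by
      filter_upwards [Iio_mem_nhds ha] with x hx using hinv0 x (le_of_lt hx)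
    exact (continuousAt_const (y := (0:ℝ))).congr (this.mono fun x hx => hx.symm)
  · -- at zero
    subst ha
    rw [ContinuousAt, hinv0 0 le_rfl]
    rw [tendsto_order]
    constructor
    · intro b hb
      exact Filter.Eventually.of_forall fun x => lt_of_lt_of_le hb (hgnn x)
    · intro b hb
      have hb2 : 0 < b/2 := by linarith
      have h0 : PhiD P' 0 = 0 := by unfold PhiD; simp
      have hfb : 0 < PhiD P' (b/2) := by
        have := hsm (Set.self_mem_Ici) (show b/2 ∈ Set.Ici (0:ℝ) from hb2.le) hb2
        rwa [h0] at this
      filter_upwards [Iio_mem_nhds hfb] with x hx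
      calc invPhi x ≤ invPhi (PhiD P' (b/2)) := hmono hx.le
        _ = b/2 := hgf (b/2) hb2.le
        _ < b := by linarith
  · -- a > 0 : image is a neighborhood
    have hga : 0 < invPhi a := auxGpos P' invPhi hP'pos hsm hinv0 hinv a ha
    apply continuousAt_of_monotoneOn_of_image_mem_nhds (s := Set.univ)
      (hmono.monotoneOn _) univ_mem
    rw [Set.image_univ]
    have hrange : Set.range invPhi = Set.Ici 0 := by
      apply Set.Subset.antisymm
      · rintro _ ⟨y, rfl⟩; exact hgnn y
      · intro x hx
        exact ⟨PhiD P' x, auxGF P' invPhi hP'pos hsm hinv0 hinv x hx⟩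
    rw [hrange]
    exact Ici_mem_nhds hga
end



-- FTC: derivative of PhiD at x > 0
lemma auxFTC (P' : ℝ → ℝ)
    (hP'cont : ContinuousOn P' (Set.Ioi 0))
    (hint : ∀ ρ : ℝ, IntegrableOn (fun s => P' s / s) (Set.Ioc 0 ρ))
    (x : ℝ) (hx : 0 < x) :
    HasDerivAt (PhiD P') (P' x / x) x := by
  have hcont : ContinuousOn (fun s => P' s / s) (Set.Ioi 0) :=
    hP'cont.div continuousOn_id (fun s hs => ne_of_gt hs)
  have hci : IntervalIntegrable (fun s => P' s / s) volume 0 x :=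
    (intervalIntegrable_iff_integrableOn_Ioc_of_le hx.le).2 (hint x)
  have hmeas : StronglyMeasurableAtFilter (fun s => P' s / s) (nhds x) :=
    hcont.stronglyMeasurableAtFilter isOpen_Ioi _ hx
  have hca : ContinuousAt (fun s => P' s / s) x :=
    hcont.continuousAt (Ioi_mem_nhds hx)
  have h := intervalIntegral.integral_hasDerivAt_right hci hmeas hca
  apply h.congr_of_eventuallyEq
  filter_upwards [Ioi_mem_nhds hx] with y hy
  rw [intervalIntegral.integral_of_le (le_of_lt hy)]
  rfl

-- the limit x / P' x → 0 as x → 0+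
lemma auxRatio (P' : ℝ → ℝ)
    (γ₀ K₀ : ℝ) (hγ₀ : γ₀ ∈ Set.Ioo (6/5 : ℝ) 2) (hK₀ : 0 < K₀)
    (hlim₀ : Filter.Tendsto (fun s => s ^ (1 - γ₀) * P' s) (nhdsWithin 0 (Set.Ioi 0)) (nhds K₀)) :
    Filter.Tendsto (fun x => x / P' x) (nhdsWithin 0 (Set.Ioi 0)) (nhds 0) := by
  have hnum : Filter.Tendsto (fun x : ℝ => x ^ (2 - γ₀)) (nhdsWithin 0 (Set.Ioi 0)) (nhds 0) := by
    have h : ContinuousAt (fun x : ℝ => x ^ (2 - γ₀)) 0 :=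
      Real.continuousAt_rpow_const 0 (2 - γ₀) (Or.inr (by linarith [hγ₀.2]))
    have := h.tendsto
    rw [Real.zero_rpow (by linarith [hγ₀.2] : (2:ℝ) - γ₀ ≠ 0)] at this
    exact this.mono_left nhdsWithin_le_nhds
  have hdiv : Filter.Tendsto (fun x : ℝ => x ^ (2 - γ₀) / (x ^ (1 - γ₀) * P' x))
      (nhdsWithin 0 (Set.Ioi 0)) (nhds 0) := by
    have := hnum.div hlim₀ (ne_of_gt hK₀)
    rw [zero_div] at this; exact this
  apply hdiv.congr'
  filter_upwards [self_mem_nhdsWithin] with x hx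
  have hx0 : (0:ℝ) < x := hx
  have h1 : x ^ (2 - γ₀) = x * x ^ (1 - γ₀) := by
    rw [show (2:ℝ) - γ₀ = 1 + (1 - γ₀) by ring, Real.rpow_add hx0, Real.rpow_one]
  rw [h1]
  rcases eq_or_ne (P' x) 0 with h | h
  · rw [h]; simp
  · field_simp



-- P'(s)/s → ∞ as s → 0+
lemma auxBlow (P' : ℝ → ℝ)
    (γ₀ K₀ : ℝ) (hγ₀ : γ₀ ∈ Set.Ioo (6/5 : ℝ) 2) (hK₀ : 0 < K₀)
    (hlim₀ : Filter.Tendsto (fun s => s ^ (1 - γ₀) * P' s) (nhdsWithin 0 (Set.Ioi 0)) (nhds K₀)) :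
    Filter.Tendsto (fun s => P' s / s) (nhdsWithin 0 (Set.Ioi 0)) Filter.atTop := by
  have hpow : Filter.Tendsto (fun s : ℝ => s ^ (γ₀ - 2)) (nhdsWithin 0 (Set.Ioi 0)) Filter.atTop := by
    have h1 : Filter.Tendsto (fun s : ℝ => s ^ (2 - γ₀)) (nhdsWithin 0 (Set.Ioi 0))
        (nhdsWithin 0 (Set.Ioi 0)) := by
      apply tendsto_nhdsWithin_of_tendsto_nhds_of_eventually_within
      · have h : ContinuousAt (fun x : ℝ => x ^ (2 - γ₀)) 0 :=
          Real.continuousAt_rpow_const 0 (2 - γ₀) (Or.inr (by linarith [hγ₀.2]))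
        have := h.tendsto
        rw [Real.zero_rpow (by linarith [hγ₀.2] : (2:ℝ) - γ₀ ≠ 0)] at this
        exact this.mono_left nhdsWithin_le_nhds
      · filter_upwards [self_mem_nhdsWithin] with x hx
        exact Real.rpow_pos_of_pos hx _
    have h2 := h1.inv_tendsto_nhdsGT_zero
    apply h2.congr'
    filter_upwards [self_mem_nhdsWithin] with x hx
    have hx0 : (0:ℝ) < x := hx
    simp only [Pi.inv_apply]
    rw [← Real.rpow_neg hx0.le]
    norm_num
  have h := hlim₀.pos_mul_atTop hK₀ hpow
  apply h.congr'
  filter_upwards [self_mem_nhdsWithin] with x hx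
  have hx0 : (0:ℝ) < x := hx
  have : x ^ (1 - γ₀) * x ^ (γ₀ - 2) = x⁻¹ := by
    rw [← Real.rpow_add hx0, show (1 - γ₀) + (γ₀ - 2) = -1 by ring, Real.rpow_neg_one]
  calc x ^ (1 - γ₀) * P' x * x ^ (γ₀ - 2) = P' x * (x ^ (1 - γ₀) * x ^ (γ₀ - 2)) := by ring
    _ = P' x / x := by rw [this, div_eq_mul_inv]



lemma auxDeriv0 (P' invPhi : ℝ → ℝ)
    (hP'pos : ∀ s, 0 < s → 0 < P' s)
    (hint : ∀ ρ : ℝ, IntegrableOn (fun s => P' s / s) (Set.Ioc 0 ρ))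
    (hsm : StrictMonoOn (PhiD P') (Set.Ici 0))
    (hinv0 : ∀ y ≤ (0:ℝ), invPhi y = 0)
    (hinv : ∀ y, 0 ≤ y → 0 ≤ invPhi y ∧ PhiD P' (invPhi y) = y)
    (hgf : ∀ x, 0 ≤ x → invPhi (PhiD P' x) = x)
    (hmono : Monotone invPhi)
    (hblow : Filter.Tendsto (fun s => P' s / s) (nhdsWithin 0 (Set.Ioi 0)) Filter.atTop) :
    HasDerivAt invPhi 0 0 := by
  rw [hasDerivAt_iff_tendsto_slope]
  have hslope : ∀ y : ℝ, slope invPhi 0 y = invPhi y / y := by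
    intro y
    rw [slope_def_field, hinv0 0 le_rfl]
    simp
  have hgnn : ∀ y, 0 ≤ invPhi y := by
    intro y
    rcases le_or_gt y 0 with h | h
    · rw [hinv0 y h]
    · exact (hinv y h.le).1
  have hslope_nn : ∀ y : ℝ, 0 ≤ slope invPhi 0 y := by
    intro y
    rw [hslope]
    rcases lt_trichotomy y 0 with h | h | h
    · rw [hinv0 y h.le]; simp
    · simp [h]
    · exact div_nonneg (hgnn y) h.le
  rw [tendsto_order]
  constructor
  · intro b hb
    exact Filter.Eventually.of_forall fun y => lt_of_lt_of_le hb (hslope_nn y)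
  · intro b hb
    -- choose δ with P' s / s ≥ 2 / b on Ioc 0 δ
    have hev : ∀ᶠ s in nhdsWithin 0 (Set.Ioi 0), 2 / b ≤ P' s / s :=
      hblow.eventually (eventually_ge_atTop (2 / b))
    obtain ⟨δ, hδ, hsub⟩ := mem_nhdsGT_iff_exists_Ioc_subset.1 hev
    have hδ0 : (0:ℝ) < δ := hδ
    have h0 : PhiD P' 0 = 0 := by unfold PhiD; simp
    have hfδ : 0 < PhiD P' δ := by
      have := hsm Set.self_mem_Ici (show δ ∈ Set.Ici (0:ℝ) from hδ0.le) hδ0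
      rwa [h0] at this
    have hgrow : ∀ x, x ∈ Set.Ioc (0:ℝ) δ → 2 / b * x ≤ PhiD P' x := by
      intro x hx
      have h := setIntegral_ge_of_const_le (c := 2 / b) (μ := volume)
        (s := Set.Ioc (0:ℝ) x) measurableSet_Ioc
        (by rw [Real.volume_Ioc]; exact ENNReal.ofReal_ne_top)
        (fun s hs => hsub ⟨hs.1, hs.2.trans hx.2⟩) (hint x)
      rwa [measureReal_def, Real.volume_Ioc, sub_zero, ENNReal.toReal_ofReal hx.1.le, smul_eq_mul, mul_comm x (2 / b)] at h
    rw [eventually_nhdsWithin_iff]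
    filter_upwards [Iio_mem_nhds hfδ] with y hy hy0
    rw [hslope]
    rcases lt_trichotomy y 0 with h | h | h
    · rw [hinv0 y h.le]; simpa using hb
    · exact absurd h (by simpa using hy0)
    · -- 0 < y < PhiD δ
      set x := invPhi y with hxdef
      have hx0 : 0 ≤ x := hgnn y
      have hfx : PhiD P' x = y := (hinv y h.le).2
      have hxδ : x ≤ δ := by
        have := hmono (le_of_lt hy)
        rwa [hgf δ hδ0.le] at this
      rcases hx0.lt_or_eq with hx | hx
      · have hgx := hgrow x ⟨hx, hxδ⟩
        rw [hfx] at hgx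
        rw [div_lt_iff₀ h]
        calc x < 2 * x := by linarith
          _ = b * (2 / b * x) := by field_simp
          _ ≤ b * y := by
              apply mul_le_mul_of_nonneg_left hgx hb.le
      · rw [← hx]; simpa using hb

theorem stmt1 (P P' : ℝ → ℝ)
    (hP : ∀ s, 0 < s → HasDerivAt P (P' s) s)
    (hP'cont : ContinuousOn P' (Set.Ioi 0))
    (hP'pos : ∀ s, 0 < s → 0 < P' s)
    (γ₀ K₀ : ℝ) (hγ₀ : γ₀ ∈ Set.Ioo (6/5 : ℝ) 2) (hK₀ : 0 < K₀)
    (hlim₀ : Filter.Tendsto (fun s => s ^ (1 - γ₀) * P' s) (nhdsWithin 0 (Set.Ioi 0)) (nhds K₀))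
    (γ₁ K₁ : ℝ) (hγ₁ : γ₁ ∈ Set.Ioo (6/5 : ℝ) 2) (hK₁ : 0 < K₁)
    (hlim₁ : Filter.Tendsto (fun s => s ^ (1 - γ₁) * P' s) Filter.atTop (nhds K₁))
    -- `invPhi` is the extended inverse `(Φ')₊⁻¹ : ℝ → [0,∞)`, vanishing on `(-∞,0]`
    (invPhi : ℝ → ℝ)
    (hinv0 : ∀ y ≤ (0:ℝ), invPhi y = 0)
    (hinv : ∀ y, 0 ≤ y → 0 ≤ invPhi y ∧ PhiD P' (invPhi y) = y)
    (ρ₀ : ℝ) (hρ₀ : 0 ≤ ρ₀) :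
    -- `z_{ρ₀}(y) = (Φ')₊⁻¹(y + Φ'(ρ₀)) - ρ₀` is C¹ on ℝ, with the stated derivative
    ∃ z' : ℝ → ℝ, Continuous z' ∧
      (∀ y : ℝ, HasDerivAt (fun y => invPhi (y + PhiD P' ρ₀) - ρ₀) (z' y) y) ∧
      (∀ y : ℝ, -(PhiD P' ρ₀) < y →
        z' y = 1 / (P' (invPhi (y + PhiD P' ρ₀)) / invPhi (y + PhiD P' ρ₀))) ∧
      (∀ y : ℝ, y ≤ -(PhiD P' ρ₀) → z' y = 0) ∧
      Filter.Tendsto z' (nhdsWithin (-(PhiD P' ρ₀)) (Set.Ioi (-(PhiD P' ρ₀)))) (nhds 0) := by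
  have hint := auxInt P' hP'cont hP'pos γ₀ K₀ hγ₀ hK₀ hlim₀
  have hsm := auxMono P' hP'cont hP'pos hint
  have hgnn := auxGnonneg P' invPhi hinv0 hinv
  have hgf := auxGF P' invPhi hP'pos hsm hinv0 hinv
  have hgpos := auxGpos P' invPhi hP'pos hsm hinv0 hinv
  have hmono := auxGMono P' invPhi hP'pos hsm hinv0 hinv
  have hgcont := auxGCont P' invPhi hP'pos hsm hinv0 hinv
  have hblow := auxBlow P' γ₀ K₀ hγ₀ hK₀ hlim₀
  have hratio := auxRatio P' γ₀ K₀ hγ₀ hK₀ hlim₀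
  have hd0 := auxDeriv0 P' invPhi hP'pos hint hsm hinv0 hinv hgf hmono hblow
  set c : ℝ := PhiD P' ρ₀ with hc
  have hGcont : Continuous (fun y => invPhi (y + c)) :=
    hgcont.comp (continuous_add_right c)
  -- derivative of invPhi on (0,∞)
  have hgderiv : ∀ y, 0 < y → HasDerivAt invPhi (invPhi y / P' (invPhi y)) y := by
    intro y hy
    have hx : 0 < invPhi y := hgpos y hy
    have hf := auxFTC P' hP'cont hint (invPhi y) hx
    have hne : P' (invPhi y) / invPhi y ≠ 0 :=
      ne_of_gt (div_pos (hP'pos _ hx) hx)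
    have hev : ∀ᶠ y' in nhds y, PhiD P' (invPhi y') = y' := by
      filter_upwards [Ioi_mem_nhds hy] with y' hy'
      exact (hinv y' (le_of_lt hy')).2
    have h := HasDerivAt.of_local_left_inverse hgcont.continuousAt hf hne hev
    rwa [inv_div] at h
  -- composition helper
  have hcomp : ∀ (y d : ℝ), HasDerivAt invPhi d (y + c) →
      HasDerivAt (fun y => invPhi (y + c) - ρ₀) d y := by
    intro y d hd
    have h1 := HasDerivAt.comp y hd ((hasDerivAt_id y).add_const c)
    have h2 := h1.sub_const ρ₀
    simpa using h2
  -- the right limit at -c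
  have hlimr : Filter.Tendsto
      (fun y => if 0 < y + c then invPhi (y + c) / P' (invPhi (y + c)) else 0)
      (nhdsWithin (-c) (Set.Ioi (-c))) (nhds 0) := by
    have hGto : Filter.Tendsto (fun y => invPhi (y + c))
        (nhdsWithin (-c) (Set.Ioi (-c))) (nhdsWithin 0 (Set.Ioi 0)) := by
      rw [tendsto_nhdsWithin_iff]
      constructor
      · have h : Filter.Tendsto (fun y => invPhi (y + c)) (nhds (-c)) (nhds 0) := by
          have h2 := hGcont.tendsto (-c)
          simpa [hinv0 0 le_rfl] using h2
        exact h.mono_left nhdsWithin_le_nhds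
      · filter_upwards [self_mem_nhdsWithin] with y hy
        exact hgpos _ (by linarith [Set.mem_Ioi.1 hy])
    have h := hratio.comp hGto
    apply h.congr'
    filter_upwards [self_mem_nhdsWithin] with y hy
    have : 0 < y + c := by linarith [Set.mem_Ioi.1 hy]
    rw [if_pos this]
    rfl
  refine ⟨fun y => if 0 < y + c then invPhi (y + c) / P' (invPhi (y + c)) else 0,
    ?_, ?_, ?_, ?_, ?_⟩
  · -- continuity
    rw [continuous_iff_continuousAt]
    intro y
    rcases lt_trichotomy (y + c) 0 with h | h | h
    · apply ContinuousAt.congr (continuousAt_const (y := (0:ℝ)))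
      filter_upwards [Iio_mem_nhds (show y < -c by linarith)] with y' hy'
      rw [if_neg (by simp only [Set.mem_Iio] at hy'; linarith)]
    · have hy : y = -c := by linarith
      subst hy
      have hval : (if 0 < -c + c then invPhi (-c + c) / P' (invPhi (-c + c)) else 0) = 0 :=
        if_neg (by linarith)
      rw [ContinuousAt, hval, ← nhdsLE_sup_nhdsGT, Filter.tendsto_sup]
      constructor
      · apply tendsto_const_nhds.congr'
        filter_upwards [self_mem_nhdsWithin] with y' hy'
        rw [if_neg (by simp only [Set.mem_Iic] at hy'; linarith)]
      · exact hlimr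
    · have hgy : 0 < invPhi (y + c) := hgpos _ h
      have hP'c : ContinuousAt P' (invPhi (y + c)) :=
        hP'cont.continuousAt (Ioi_mem_nhds hgy)
      have hPG : ContinuousAt (fun y => P' (invPhi (y + c))) y :=
        ContinuousAt.comp (g := P') (f := fun y : ℝ => invPhi (y + c)) hP'c
          hGcont.continuousAt
      have hφ : ContinuousAt
          (fun y => invPhi (y + c) / P' (invPhi (y + c))) y :=
        (hGcont.continuousAt).div hPG (ne_of_gt (hP'pos _ hgy))
      apply hφ.congr
      filter_upwards [Ioi_mem_nhds (show -c < y by linarith)] with y' hy'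
      rw [if_pos (by simp only [Set.mem_Ioi] at hy'; linarith)]
  · -- derivative
    intro y
    beta_reduce
    rcases lt_trichotomy (y + c) 0 with h | h | h
    · rw [if_neg (not_lt.2 (by linarith : y + c ≤ 0))]
      apply (hasDerivAt_const y (-ρ₀)).congr_of_eventuallyEq
      filter_upwards [Iio_mem_nhds (show y < -c by linarith)] with y' hy'
      simp only [Set.mem_Iio] at hy'
      rw [hinv0 (y' + c) (by linarith), zero_sub]
    · rw [if_neg (not_lt.2 h.le)]
      apply hcomp
      rw [h]
      exact hd0
    · rw [if_pos h]
      exact hcomp y _ (hgderiv (y + c) h)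
  · intro y hy
    beta_reduce
    rw [if_pos (by linarith : 0 < y + c), one_div, inv_div]
  · intro y hy
    beta_reduce
    rw [if_neg (not_lt.2 (by linarith : y + c ≤ 0))]
  · exact hlimr
end

section
/- Fix ρ₀ ≥ 0. The Legendre transform Ψ*_{ρ₀} is continuously differentiable on ℝ, with (Ψ*_{ρ₀})'(y) = −z_{ρ₀}(y) = −(Φ')₊⁻¹(y + Φ'(ρ₀)) + ρ₀ for all y ∈ ℝ. -/
open MeasureTheory Filter Set

/-- Enthalpy `Φ(ρ) = ∫₀^ρ Φ'(σ) dσ`. -/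
noncomputable def Phi (P' : ℝ → ℝ) (ρ : ℝ) : ℝ := ∫ σ in Set.Ioc (0:ℝ) ρ, PhiD P' σ

/-- `H_{ρ₀,y}(τ) = Ψ_{ρ₀}(τ) - y τ` where `Ψ_{ρ₀}(τ) = Φ(τ+ρ₀) - Φ(ρ₀) - Φ'(ρ₀) τ`. -/
noncomputable def Hfun (P' : ℝ → ℝ) (ρ₀ y τ : ℝ) : ℝ :=
  (Phi P' (τ + ρ₀) - Phi P' ρ₀ - PhiD P' ρ₀ * τ) - y * τ

/-- Legendre transform `Ψ*_{ρ₀}(y) = inf_{τ ≥ -ρ₀} H_{ρ₀,y}(τ)`. -/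
noncomputable def PsiStar (P' : ℝ → ℝ) (ρ₀ y : ℝ) : ℝ :=
  sInf (Hfun P' ρ₀ y '' Set.Ici (-ρ₀))

theorem stmt2 (P P' : ℝ → ℝ)
    (hP : ∀ s, 0 < s → HasDerivAt P (P' s) s)
    (hP'cont : ContinuousOn P' (Set.Ioi 0))
    (hP'pos : ∀ s, 0 < s → 0 < P' s)
    (γ₀ K₀ : ℝ) (hγ₀ : γ₀ ∈ Set.Ioo (6/5 : ℝ) 2) (hK₀ : 0 < K₀)
    (hlim₀ : Filter.Tendsto (fun s => s ^ (1 - γ₀) * P' s) (nhdsWithin 0 (Set.Ioi 0)) (nhds K₀))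
    (γ₁ K₁ : ℝ) (hγ₁ : γ₁ ∈ Set.Ioo (6/5 : ℝ) 2) (hK₁ : 0 < K₁)
    (hlim₁ : Filter.Tendsto (fun s => s ^ (1 - γ₁) * P' s) Filter.atTop (nhds K₁))
    -- `invPhi` is the extended inverse `(Φ')₊⁻¹ : ℝ → [0,∞)`, vanishing on `(-∞,0]`
    (invPhi : ℝ → ℝ)
    (hinv0 : ∀ y ≤ (0:ℝ), invPhi y = 0)
    (hinv : ∀ y, 0 ≤ y → 0 ≤ invPhi y ∧ PhiD P' (invPhi y) = y)
    (ρ₀ : ℝ) (hρ₀ : 0 ≤ ρ₀) :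
    -- `Ψ*_{ρ₀}` is C¹ on ℝ with `(Ψ*_{ρ₀})'(y) = -(Φ')₊⁻¹(y + Φ'(ρ₀)) + ρ₀`
    Continuous (fun y : ℝ => -(invPhi (y + PhiD P' ρ₀)) + ρ₀) ∧
    ∀ y : ℝ, HasDerivAt (PsiStar P' ρ₀) (-(invPhi (y + PhiD P' ρ₀)) + ρ₀) y := by
  obtain ⟨hγ₀1, hγ₀2⟩ := hγ₀
  -- Step 1: integrability of P'/s near 0
  have hf_int : ∀ ρ : ℝ, IntegrableOn (fun s => P' s / s) (Set.Ioc 0 ρ) := by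
    intro ρ
    rcases le_or_gt ρ 0 with hρ | hρ
    · rw [Set.Ioc_eq_empty (by exact fun h => absurd (h.trans_le hρ) (lt_irrefl 0))]
      exact integrableOn_empty
    · have hev : ∀ᶠ s in nhdsWithin 0 (Set.Ioi 0), s ^ (1 - γ₀) * P' s < K₀ + 1 :=
        hlim₀.eventually_lt_const (by linarith)
      rw [eventually_nhdsWithin_iff] at hev
      obtain ⟨δ, hδpos, hδ⟩ := Metric.eventually_nhds_iff.mp hev
      set m := min (δ/2) ρ with hm
      have hm0 : 0 < m := lt_min (by linarith) hρ
      have hmδ : m < δ := lt_of_le_of_lt (min_le_left _ _) (by linarith)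
      have hbound : ∀ s ∈ Set.Ioc (0:ℝ) m, s ^ (1 - γ₀) * P' s < K₀ + 1 := by
        intro s hs
        apply hδ (show dist s 0 < δ by
          rw [Real.dist_eq, sub_zero, abs_of_pos hs.1]; exact lt_of_le_of_lt hs.2 hmδ)
        exact hs.1
      have h1 : IntegrableOn (fun s => P' s / s) (Set.Ioc 0 m) := by
        have hg : IntegrableOn (fun s : ℝ => (K₀ + 1) * s ^ (γ₀ - 2)) (Set.Ioc 0 m) := by
          have hr : IntervalIntegrable (fun s : ℝ => s ^ (γ₀ - 2)) volume 0 m :=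
            intervalIntegral.intervalIntegrable_rpow' (by linarith)
          exact ((intervalIntegrable_iff_integrableOn_Ioc_of_le hm0.le).mp hr).const_mul _
        apply Integrable.mono' hg
        · apply ContinuousOn.aestronglyMeasurable _ measurableSet_Ioc
          exact (hP'cont.mono (fun x hx => hx.1)).div
            (continuousOn_id) (fun x hx => ne_of_gt hx.1)
        · rw [ae_restrict_iff' measurableSet_Ioc]
          filter_upwards with s hs
          have hs0 : (0:ℝ) < s := hs.1
          have hpow : s ^ (γ₀ - 2) * s ^ (1 - γ₀) = s⁻¹ := by
            rw [← Real.rpow_add hs0]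
            have : γ₀ - 2 + (1 - γ₀) = (-1 : ℝ) := by ring
            rw [this, Real.rpow_neg_one]
          have hfs : 0 < P' s / s := div_pos (hP'pos s hs0) hs0
          rw [Real.norm_eq_abs, abs_of_pos hfs]
          calc P' s / s = s ^ (γ₀ - 2) * (s ^ (1 - γ₀) * P' s) := by
                rw [div_eq_mul_inv, ← hpow]; ring
            _ ≤ s ^ (γ₀ - 2) * (K₀ + 1) :=
                mul_le_mul_of_nonneg_left (hbound s hs).le (Real.rpow_nonneg hs0.le _)
            _ = (K₀ + 1) * s ^ (γ₀ - 2) := mul_comm _ _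
      have h2 : IntegrableOn (fun s => P' s / s) (Set.Ioc m ρ) := by
        have hc : ContinuousOn (fun s => P' s / s) (Set.Icc m ρ) := by
          apply ((hP'cont.mono (fun x hx => lt_of_lt_of_le hm0 hx.1)).div continuousOn_id
            (fun x hx => ne_of_gt (lt_of_lt_of_le hm0 hx.1)))
        exact (hc.integrableOn_Icc).mono_set Set.Ioc_subset_Icc_self
      rw [← Set.Ioc_union_Ioc_eq_Ioc hm0.le (min_le_right (δ/2) ρ)]
      exact h1.union h2
  -- the indicator extension
  set F : ℝ → ℝ := Set.indicator (Set.Ioi 0) (fun s => P' s / s) with hF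
  have hFkey : ∀ a b : ℝ, IntegrableOn F (Set.Ioc a b) := by
    intro a b
    have h1 : IntegrableOn (fun s => P' s / s) (Set.Ioi 0 ∩ Set.Ioc a b) :=
      (hf_int b).mono_set (fun x hx => ⟨hx.1, hx.2.2⟩)
    have h2 : IntegrableOn (fun s => P' s / s) (Set.Ioi 0) (volume.restrict (Set.Ioc a b)) := by
      rwa [IntegrableOn, Measure.restrict_restrict measurableSet_Ioi]
    exact (integrable_indicator_iff measurableSet_Ioi).2 h2
  have hFint : ∀ a b : ℝ, IntervalIntegrable F volume a b :=
    fun a b => ⟨hFkey a b, hFkey b a⟩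
  have hF0 : ∀ s, 0 ≤ F s := by
    intro s
    exact Set.indicator_nonneg (fun t ht => (div_pos (hP'pos t ht) ht).le) s
  -- PhiD as a primitive
  have hPhiD_eq : ∀ ρ : ℝ, PhiD P' ρ = ∫ x in (0:ℝ)..ρ, F x := by
    intro ρ
    rcases le_or_gt 0 ρ with h | h
    · rw [intervalIntegral.integral_of_le h, PhiD, hF,
        setIntegral_indicator measurableSet_Ioi]
      have hss : Set.Ioc (0:ℝ) ρ ∩ Set.Ioi 0 = Set.Ioc (0:ℝ) ρ :=
        Set.inter_eq_left.2 (fun x (hx : x ∈ Set.Ioc (0:ℝ) ρ) => hx.1)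
      rw [hss]
    · rw [PhiD, Set.Ioc_eq_empty (fun hc => absurd (hc.trans h) (lt_irrefl 0)),
        intervalIntegral.integral_of_ge h.le]
      rw [MeasureTheory.setIntegral_eq_zero_of_forall_eq_zero
        (fun x (hx : x ∈ Set.Ioc ρ (0:ℝ)) => Set.indicator_of_notMem
          (fun hc => absurd ((Set.mem_Ioi.1 hc).trans_le hx.2) (lt_irrefl 0)) _)]
      simp
  have hPhiD_cont : Continuous (PhiD P') :=
    (intervalIntegral.continuous_primitive hFint 0).congr (fun ρ => (hPhiD_eq ρ).symm)
  have hPhiD_zero : ∀ x : ℝ, x ≤ 0 → PhiD P' x = 0 := by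
    intro x hx
    rw [PhiD, Set.Ioc_eq_empty (fun hc => absurd (hc.trans_le hx) (lt_irrefl 0))]
    simp
  have hPhiD_diff : ∀ a b : ℝ, PhiD P' b - PhiD P' a = ∫ x in a..b, F x := by
    intro a b
    rw [hPhiD_eq a, hPhiD_eq b,
      ← intervalIntegral.integral_add_adjacent_intervals (hFint 0 a) (hFint a b)]
    ring
  have hPhiD_mono : Monotone (PhiD P') := by
    intro a b hab
    have h2 : 0 ≤ ∫ x in a..b, F x :=
      intervalIntegral.integral_nonneg hab (fun u _ => hF0 u)
    have := hPhiD_diff a b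
    linarith
  have hPhiD_strict : StrictMonoOn (PhiD P') (Set.Ici 0) := by
    intro a ha b hb hab
    have hpos : 0 < ∫ x in a..b, F x := by
      apply intervalIntegral.intervalIntegral_pos_of_pos_on (hFint a b) _ hab
      intro x hx
      have hx0 : (0:ℝ) < x := lt_of_le_of_lt ha hx.1
      rw [hF, Set.indicator_of_mem (Set.mem_Ioi.2 hx0)]
      exact div_pos (hP'pos x hx0) hx0
    have := hPhiD_diff a b
    linarith
  have hPhiD_nonneg : ∀ ρ : ℝ, 0 ≤ PhiD P' ρ := by
    intro ρ
    rcases le_or_gt ρ 0 with h | h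
    · rw [hPhiD_zero ρ h]
    · have := hPhiD_mono h.le
      rwa [hPhiD_zero 0 le_rfl] at this
  -- Phi as a primitive of PhiD
  have hPhi_eq : ∀ ρ : ℝ, Phi P' ρ = ∫ x in (0:ℝ)..ρ, PhiD P' x := by
    intro ρ
    rcases le_or_gt 0 ρ with h | h
    · rw [intervalIntegral.integral_of_le h, Phi]
    · rw [Phi, Set.Ioc_eq_empty (fun hc => absurd (hc.trans h) (lt_irrefl 0)),
        intervalIntegral.integral_of_ge h.le,
        MeasureTheory.setIntegral_eq_zero_of_forall_eq_zero
          (fun x (hx : x ∈ Set.Ioc ρ (0:ℝ)) => hPhiD_zero x hx.2)]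
      simp
  have hPhi_deriv : ∀ ρ : ℝ, HasDerivAt (Phi P') (PhiD P' ρ) ρ := by
    intro ρ
    have hfe : Phi P' = fun u => ∫ x in (0:ℝ)..u, PhiD P' x := funext hPhi_eq
    rw [hfe]
    exact (hPhiD_cont.integral_hasStrictDerivAt 0 ρ).hasDerivAt
  -- derivative of Hfun
  have hH_deriv : ∀ y τ : ℝ,
      HasDerivAt (Hfun P' ρ₀ y) (PhiD P' (τ + ρ₀) - PhiD P' ρ₀ - y) τ := by
    intro y τ
    have h1 : HasDerivAt (fun σ : ℝ => Phi P' (σ + ρ₀)) (PhiD P' (τ + ρ₀)) τ := by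
      have := (hPhi_deriv (τ + ρ₀)).comp τ ((hasDerivAt_id τ).add_const ρ₀)
      simpa [Function.comp_def] using this
    have h2 : HasDerivAt (fun σ : ℝ => PhiD P' ρ₀ * σ) (PhiD P' ρ₀) τ := by
      simpa using (hasDerivAt_id τ).const_mul (PhiD P' ρ₀)
    have h3 : HasDerivAt (fun σ : ℝ => y * σ) y τ := by
      simpa using (hasDerivAt_id τ).const_mul y
    have := ((h1.sub_const (Phi P' ρ₀)).sub h2).sub h3
    exact this
  -- invPhi facts
  have hinv_nonneg : ∀ w : ℝ, 0 ≤ invPhi w := by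
    intro w
    rcases le_or_gt w 0 with h | h
    · rw [hinv0 w h]
    · exact (hinv w h.le).1
  -- the minimizer function
  set T : ℝ → ℝ := fun y => invPhi (y + PhiD P' ρ₀) - ρ₀ with hTdef
  have hT_mem : ∀ y : ℝ, T y ∈ Set.Ici (-ρ₀) := by
    intro y
    have := hinv_nonneg (y + PhiD P' ρ₀)
    simp only [hTdef, Set.mem_Ici]
    linarith
  -- continuity of invPhi
  have hinv_cont : Continuous invPhi := by
    rw [continuous_iff_continuousAt]
    intro y
    rw [ContinuousAt, tendsto_order]
    constructor
    · intro b hb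
      rcases lt_or_ge b 0 with hb0 | hb0
      · exact Eventually.of_forall (fun w => lt_of_lt_of_le hb0 (hinv_nonneg w))
      · have hy_pos : 0 < y := by
          by_contra h
          push_neg at h
          rw [hinv0 y h] at hb
          exact absurd (hb0.trans_lt hb) (lt_irrefl 0)
        have hkey : PhiD P' b < y := by
          have := hPhiD_strict (Set.mem_Ici.2 hb0)
            (Set.mem_Ici.2 (hinv_nonneg y)) hb
          rwa [(hinv y hy_pos.le).2] at this
        filter_upwards [eventually_gt_nhds hkey] with w hw
        have hw0 : 0 < w := lt_of_le_of_lt (hPhiD_nonneg b) hw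
        by_contra hc
        push_neg at hc
        have h1 : PhiD P' (invPhi w) ≤ PhiD P' b := hPhiD_mono hc
        rw [(hinv w hw0.le).2] at h1
        linarith
    · intro b hb
      have hb0 : 0 < b := lt_of_le_of_lt (hinv_nonneg y) hb
      have hkey : y < PhiD P' b := by
        rcases le_or_gt y 0 with h | h
        · apply lt_of_le_of_lt h
          have := hPhiD_strict (Set.mem_Ici.2 le_rfl) (Set.mem_Ici.2 hb0.le) hb0
          rwa [hPhiD_zero 0 le_rfl] at this
        · have := hPhiD_strict (Set.mem_Ici.2 (hinv_nonneg y))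
            (Set.mem_Ici.2 hb0.le) hb
          rwa [(hinv y h.le).2] at this
      filter_upwards [eventually_lt_nhds hkey] with w hw
      rcases le_or_gt w 0 with h | h
      · rw [hinv0 w h]; exact hb0
      · by_contra hc
        push_neg at hc
        have h1 : PhiD P' b ≤ PhiD P' (invPhi w) := hPhiD_mono hc
        rw [(hinv w h.le).2] at h1
        linarith
  have hT_cont : Continuous T :=
    (hinv_cont.comp (continuous_id.add continuous_const)).sub continuous_const
  -- the minimization
  have hmin : ∀ y : ℝ, ∀ τ ∈ Set.Ici (-ρ₀), Hfun P' ρ₀ y (T y) ≤ Hfun P' ρ₀ y τ := by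
    intro y τ hτ
    set Y : ℝ := y + PhiD P' ρ₀ with hYdef
    have hd : ∀ σ : ℝ, HasDerivAt (Hfun P' ρ₀ y) (PhiD P' (σ + ρ₀) - Y) σ := by
      intro σ
      have := hH_deriv y σ
      have he : PhiD P' (σ + ρ₀) - PhiD P' ρ₀ - y = PhiD P' (σ + ρ₀) - Y := by
        rw [hYdef]; ring
      rwa [he] at this
    rcases le_total τ (T y) with hcase | hcase
    · have ha : AntitoneOn (Hfun P' ρ₀ y) (Set.Icc (-ρ₀) (T y)) := by
        apply antitoneOn_of_deriv_nonpos (convex_Icc _ _)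
        · exact fun σ _ => (hd σ).continuousAt.continuousWithinAt
        · exact fun σ _ => (hd σ).differentiableAt.differentiableWithinAt
        · intro σ hσ
          rw [interior_Icc] at hσ
          rw [(hd σ).deriv]
          have hY : 0 ≤ Y := by
            by_contra h
            push_neg at h
            have hT0 : T y = -ρ₀ := by
              simp only [hTdef]
              rw [hinv0 Y h.le]
              ring
            rw [hT0] at hσ
            exact absurd (hσ.1.trans hσ.2) (lt_irrefl _)
          have hle : σ + ρ₀ ≤ invPhi Y := by
            have := hσ.2
            simp only [hTdef] at this
            linarith
          have := hPhiD_mono hle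
          rw [(hinv Y hY).2] at this
          linarith
      exact ha (Set.mem_Icc.2 ⟨hτ, hcase⟩) (Set.mem_Icc.2 ⟨hT_mem y, le_rfl⟩) hcase
    · have hm : MonotoneOn (Hfun P' ρ₀ y) (Set.Ici (T y)) := by
        apply monotoneOn_of_deriv_nonneg (convex_Ici _)
        · exact fun σ _ => (hd σ).continuousAt.continuousWithinAt
        · exact fun σ _ => (hd σ).differentiableAt.differentiableWithinAt
        · intro σ hσ
          rw [interior_Ici] at hσ
          rw [(hd σ).deriv]
          rcases le_or_gt Y 0 with h | h
          · have := hPhiD_nonneg (σ + ρ₀)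
            linarith
          · have hge : invPhi Y ≤ σ + ρ₀ := by
              have := (Set.mem_Ioi.1 hσ).le
              simp only [hTdef] at this
              linarith
            have := hPhiD_mono hge
            rw [(hinv Y h.le).2] at this
            linarith
      exact hm (Set.mem_Ici.2 le_rfl) (Set.mem_Ici.2 hcase) hcase
  have hPsi_eq : ∀ y : ℝ, PsiStar P' ρ₀ y = Hfun P' ρ₀ y (T y) := by
    intro y
    apply IsLeast.csInf_eq
    constructor
    · exact ⟨T y, hT_mem y, rfl⟩
    · rintro _ ⟨τ, hτ, rfl⟩
      exact hmin y τ hτ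
  have hub : ∀ y w : ℝ, PsiStar P' ρ₀ w ≤ PsiStar P' ρ₀ y - (w - y) * T y := by
    intro y w
    rw [hPsi_eq w, hPsi_eq y]
    have h1 := hmin w (T y) (hT_mem y)
    have heq : Hfun P' ρ₀ w (T y) = Hfun P' ρ₀ y (T y) - (w - y) * T y := by
      simp only [Hfun]; ring
    linarith
  have hval : ∀ y : ℝ, -(invPhi (y + PhiD P' ρ₀)) + ρ₀ = -(T y) := by
    intro y
    simp only [hTdef]
    ring
  constructor
  · have : Continuous (fun y : ℝ => -(T y)) := hT_cont.neg
    exact this.congr (fun y => (hval y).symm)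
  · intro y
    rw [hval y]
    rw [hasDerivAt_iff_isLittleO]
    rw [Asymptotics.isLittleO_iff]
    intro c hc
    have h1 : Tendsto (fun w => |T w - T y|) (nhds y) (nhds 0) := by
      have h0 : Continuous (fun w => |T w - T y|) := (hT_cont.sub continuous_const).abs
      have := h0.tendsto y
      simpa using this
    filter_upwards [h1.eventually_lt_const hc] with w hw
    have A := hub y w
    have B := hub w y
    have hE1 : PsiStar P' ρ₀ w - PsiStar P' ρ₀ y + (w - y) * T y ≤ 0 := by linarith
    have hE2 : (w - y) * (T y - T w) ≤ PsiStar P' ρ₀ w - PsiStar P' ρ₀ y + (w - y) * T y := by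
      nlinarith [B]
    have hEeq : PsiStar P' ρ₀ w - PsiStar P' ρ₀ y - (w - y) • (-(T y))
        = PsiStar P' ρ₀ w - PsiStar P' ρ₀ y + (w - y) * T y := by
      simp only [smul_eq_mul]; ring
    rw [Real.norm_eq_abs, Real.norm_eq_abs, hEeq]
    rw [abs_le]
    constructor
    · have h3 : -( |w - y| * |T y - T w| ) ≤ (w - y) * (T y - T w) := neg_abs_le _ |>.trans_eq' (by rw [abs_mul])
      have h4 : |T y - T w| ≤ c := by rw [abs_sub_comm]; exact hw.le
      have h5 : |w - y| * |T y - T w| ≤ c * |w - y| := by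
        rw [mul_comm]
        exact mul_le_mul_of_nonneg_right h4 (abs_nonneg _)
      linarith
    · have : 0 ≤ c * |w - y| := mul_nonneg hc.le (abs_nonneg _)
      linarith
end

section
/- There exist constants N₂ > 0 and C > 0 such that 1/Φ''((Φ')⁻¹(y)) ≤ C y^{(2−γ₁)/(γ₁−1)} for all y > N₂, where (Φ')⁻¹ : [0,∞) → [0,∞) is the inverse of Φ' and Φ''(s) = P'(s)/s. -/
open MeasureTheory Filter Set

theorem stmt13 (P P' : ℝ → ℝ)
    (hP : ∀ s, 0 < s → HasDerivAt P (P' s) s)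
    (hP'cont : ContinuousOn P' (Set.Ioi 0))
    (hP'pos : ∀ s, 0 < s → 0 < P' s)
    (γ₀ K₀ : ℝ) (hγ₀ : γ₀ ∈ Set.Ioo (6/5 : ℝ) 2) (hK₀ : 0 < K₀)
    (hlim₀ : Filter.Tendsto (fun s => s ^ (1 - γ₀) * P' s) (nhdsWithin 0 (Set.Ioi 0)) (nhds K₀))
    (γ₁ K₁ : ℝ) (hγ₁ : γ₁ ∈ Set.Ioo (6/5 : ℝ) 2) (hK₁ : 0 < K₁)
    (hlim₁ : Filter.Tendsto (fun s => s ^ (1 - γ₁) * P' s) Filter.atTop (nhds K₁))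
    -- `invPhi` is the inverse `(Φ')⁻¹ : [0,∞) → [0,∞)` of `Φ'`
    (invPhi : ℝ → ℝ)
    (hinv : ∀ y, 0 ≤ y → 0 ≤ invPhi y ∧ PhiD P' (invPhi y) = y) :
    -- `1/Φ''((Φ')⁻¹(y)) = (Φ')⁻¹(y) / P'((Φ')⁻¹(y)) ≤ C y^((2-γ₁)/(γ₁-1))` for `y > N₂`
    ∃ N₂ > (0:ℝ), ∃ C > (0:ℝ), ∀ y : ℝ, N₂ < y →
      1 / (P' (invPhi y) / invPhi y) ≤ C * y ^ ((2 - γ₁) / (γ₁ - 1)) := by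
  obtain ⟨hγ₀l, hγ₀u⟩ := hγ₀
  obtain ⟨hγ₁l, hγ₁u⟩ := hγ₁
  have hγ₁1 : (0:ℝ) < γ₁ - 1 := by linarith
  have hγ₁2 : (0:ℝ) < 2 - γ₁ := by linarith
  set α : ℝ := (2 - γ₁) / (γ₁ - 1) with hα
  have hαpos : 0 < α := div_pos hγ₁2 hγ₁1
  -- continuity of the integrand on (0,∞)
  have hfc : ContinuousOn (fun s => P' s / s) (Set.Ioi 0) :=
    hP'cont.div continuousOn_id (fun s hs => ne_of_gt hs)
  -- a small δ where P' s ≤ 2K₀ s^(γ₀-1)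
  have h0 : ∀ᶠ s in nhdsWithin 0 (Set.Ioi 0), s ^ (1 - γ₀) * P' s < 2 * K₀ :=
    hlim₀.eventually_lt_const (by linarith)
  obtain ⟨δ, hδmem, hδ⟩ := mem_nhdsGT_iff_exists_Ioc_subset.mp h0
  have hδpos : (0:ℝ) < δ := hδmem
  -- integrability on Ioc 0 δ
  have hintδ : IntegrableOn (fun s => P' s / s) (Set.Ioc 0 δ) := by
    have hg : IntegrableOn (fun s : ℝ => 2 * K₀ * s ^ (γ₀ - 2)) (Set.Ioc 0 δ) := by
      apply Integrable.const_mul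
      have h1 : IntervalIntegrable (fun s : ℝ => s ^ (γ₀ - 2)) volume 0 δ :=
        intervalIntegral.intervalIntegrable_rpow' (by linarith)
      exact (intervalIntegrable_iff_integrableOn_Ioc_of_le hδpos.le).mp h1
    refine hg.mono' ((hfc.mono Set.Ioc_subset_Ioi_self).aestronglyMeasurable measurableSet_Ioc) ?_
    filter_upwards [ae_restrict_mem measurableSet_Ioc] with s hs
    have hs0 : 0 < s := hs.1
    have hPp := hP'pos s hs0
    have hb : s ^ (1 - γ₀) * P' s < 2 * K₀ := hδ hs
    have hid : s ^ (γ₀ - 1) * s ^ (1 - γ₀) = 1 := by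
      rw [← Real.rpow_add hs0]
      norm_num
    have hP'le : P' s ≤ s ^ (γ₀ - 1) * (2 * K₀) := by
      calc P' s = s ^ (γ₀ - 1) * (s ^ (1 - γ₀) * P' s) := by
            rw [← mul_assoc, hid, one_mul]
        _ ≤ s ^ (γ₀ - 1) * (2 * K₀) := by
            exact mul_le_mul_of_nonneg_left hb.le (Real.rpow_nonneg hs0.le _)
    rw [Real.norm_of_nonneg (div_nonneg hPp.le hs0.le)]
    have hdiv : s ^ (γ₀ - 1) * (2 * K₀) / s = 2 * K₀ * s ^ (γ₀ - 2) := by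
      have e : s ^ (γ₀ - 2) * s = s ^ (γ₀ - 1) := by
        rw [← Real.rpow_add_one hs0.ne']
        congr 1
        ring
      rw [div_eq_iff hs0.ne', ← e]
      ring
    calc P' s / s ≤ s ^ (γ₀ - 1) * (2 * K₀) / s := by gcongr
      _ = 2 * K₀ * s ^ (γ₀ - 2) := hdiv
  -- integrability on Ioc 0 b for all b
  have hint : ∀ b : ℝ, IntegrableOn (fun s => P' s / s) (Set.Ioc 0 b) := by
    intro b
    have h2 : IntegrableOn (fun s => P' s / s) (Set.Ioc δ b) := by
      have hc : ContinuousOn (fun s => P' s / s) (Set.Icc δ b) :=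
        hfc.mono (fun x hx => lt_of_lt_of_le hδpos hx.1)
      exact hc.integrableOn_Icc.mono_set Set.Ioc_subset_Icc_self
    refine (hintδ.union h2).mono_set (fun s hs => ?_)
    rcases le_or_gt s δ with h | h
    · exact Or.inl ⟨hs.1, h⟩
    · exact Or.inr ⟨h, hs.2⟩
  -- nonnegativity of tail integrals
  have hnn : ∀ a b : ℝ, 0 ≤ a → 0 ≤ ∫ s in Set.Ioc a b, P' s / s := by
    intro a b ha
    refine setIntegral_nonneg measurableSet_Ioc (fun s hs => ?_)
    have hs0 : 0 < s := lt_of_le_of_lt ha hs.1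
    exact div_nonneg (hP'pos s hs0).le hs0.le
  -- splitting and monotonicity
  have hsplit : ∀ a b : ℝ, 0 ≤ a → a ≤ b →
      PhiD P' b = PhiD P' a + ∫ s in Set.Ioc a b, P' s / s := by
    intro a b ha hab
    have hu : Set.Ioc (0:ℝ) a ∪ Set.Ioc a b = Set.Ioc 0 b := Set.Ioc_union_Ioc_eq_Ioc ha hab
    have h := setIntegral_union (f := fun s => P' s / s) (μ := volume)
      (Set.Ioc_disjoint_Ioc_of_le (a := (0:ℝ)) (b := a) (c := a) (d := b) le_rfl) measurableSet_Ioc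
      (hint a) ((hint b).mono_set (fun s hs => ⟨lt_of_le_of_lt ha hs.1, hs.2⟩))
    rw [hu] at h
    exact h
  have hmono : ∀ a b : ℝ, 0 ≤ a → a ≤ b → PhiD P' a ≤ PhiD P' b := by
    intro a b ha hab
    rw [hsplit a b ha hab]
    linarith [hnn a b ha]
  -- threshold s₀ where P' s ≥ (K₁/2) s^(γ₁-1)
  have h1 : ∀ᶠ s in atTop, K₁ / 2 < s ^ (1 - γ₁) * P' s :=
    hlim₁.eventually_const_lt (by linarith)
  obtain ⟨s₀', hs₀'⟩ := eventually_atTop.mp h1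
  set s₀ : ℝ := max s₀' 1 with hs₀def
  have hs₀1 : (1:ℝ) ≤ s₀ := le_max_right _ _
  have hs₀pos : (0:ℝ) < s₀ := lt_of_lt_of_le one_pos hs₀1
  have key : ∀ s : ℝ, s₀ ≤ s → K₁ / 2 * s ^ (γ₁ - 1) ≤ P' s := by
    intro s hs
    have hs0 : (0:ℝ) < s := lt_of_lt_of_le hs₀pos hs
    have h := hs₀' s (le_trans (le_max_left _ _) hs)
    have hid : s ^ (γ₁ - 1) * s ^ (1 - γ₁) = 1 := by
      rw [← Real.rpow_add hs0]; norm_num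
    calc K₁ / 2 * s ^ (γ₁ - 1) ≤ (s ^ (1 - γ₁) * P' s) * s ^ (γ₁ - 1) := by
          exact mul_le_mul_of_nonneg_right h.le (Real.rpow_nonneg hs0.le _)
      _ = P' s := by
          rw [mul_comm (s ^ (1 - γ₁)) (P' s), mul_assoc, mul_comm (s ^ (1 - γ₁)) _, hid, mul_one]
  -- the point ρ₁ beyond which ρ^(γ₁-1) ≥ 2 s₀^(γ₁-1)
  set c2 : ℝ := (2:ℝ) ^ ((1:ℝ) / (γ₁ - 1)) with hc2
  have hc2pos : 0 < c2 := Real.rpow_pos_of_pos (by norm_num) _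
  have hc2one : (1:ℝ) ≤ c2 := by
    calc (1:ℝ) = (2:ℝ) ^ (0:ℝ) := by simp
      _ ≤ c2 := Real.rpow_le_rpow_of_exponent_le one_le_two (by positivity)
  set ρ₁ : ℝ := s₀ * c2 with hρ₁def
  have hρ₁pos : 0 < ρ₁ := mul_pos hs₀pos hc2pos
  have hρ₁s₀ : s₀ ≤ ρ₁ := by
    calc s₀ = s₀ * 1 := (mul_one _).symm
      _ ≤ s₀ * c2 := by gcongr
  -- for ρ ≥ ρ₁ : s₀^(γ₁-1) ≤ ρ^(γ₁-1)/2
  have hpow2 : ∀ ρ : ℝ, ρ₁ ≤ ρ → 2 * s₀ ^ (γ₁ - 1) ≤ ρ ^ (γ₁ - 1) := by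
    intro ρ hρ
    have hρ0 : 0 ≤ ρ := le_trans hρ₁pos.le hρ
    have h1 : ρ₁ ^ (γ₁ - 1) ≤ ρ ^ (γ₁ - 1) :=
      Real.rpow_le_rpow hρ₁pos.le hρ hγ₁1.le
    have h2 : ρ₁ ^ (γ₁ - 1) = s₀ ^ (γ₁ - 1) * 2 := by
      rw [hρ₁def, Real.mul_rpow hs₀pos.le hc2pos.le, hc2,
        ← Real.rpow_mul (by norm_num : (0:ℝ) ≤ 2)]
      rw [div_mul_cancel₀ _ (ne_of_gt hγ₁1), Real.rpow_one]
    linarith [h1, h2.symm.le]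
  -- lower bound on PhiD ρ for ρ ≥ ρ₁
  set b : ℝ := K₁ / (4 * (γ₁ - 1)) with hb
  have hbpos : 0 < b := by positivity
  have hlower : ∀ ρ : ℝ, ρ₁ ≤ ρ → b * ρ ^ (γ₁ - 1) ≤ PhiD P' ρ := by
    intro ρ hρ
    have hρ0 : 0 < ρ := lt_of_lt_of_le hρ₁pos hρ
    have hs₀ρ : s₀ ≤ ρ := le_trans hρ₁s₀ hρ
    have step1 : (∫ s in Set.Ioc s₀ ρ, K₁ / 2 * s ^ (γ₁ - 2)) ≤ ∫ s in Set.Ioc s₀ ρ, P' s / s := by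
      refine setIntegral_mono_on ?_ ?_ measurableSet_Ioc ?_
      · apply Integrable.const_mul
        have h1 : IntervalIntegrable (fun s : ℝ => s ^ (γ₁ - 2)) volume s₀ ρ :=
          intervalIntegral.intervalIntegrable_rpow' (by linarith)
        exact (intervalIntegrable_iff_integrableOn_Ioc_of_le hs₀ρ).mp h1
      · exact (hint ρ).mono_set (fun s hs => ⟨lt_of_lt_of_le hs₀pos hs.1.le, hs.2⟩)
      · intro s hs
        have hs0 : 0 < s := lt_of_lt_of_le hs₀pos hs.1.le
        have hk := key s hs.1.le
        have hdiv : K₁ / 2 * s ^ (γ₁ - 1) / s = K₁ / 2 * s ^ (γ₁ - 2) := by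
          have e : s ^ (γ₁ - 2) * s = s ^ (γ₁ - 1) := by
            rw [← Real.rpow_add_one hs0.ne']
            congr 1
            ring
          rw [div_eq_iff hs0.ne', ← e]
          ring
        calc K₁ / 2 * s ^ (γ₁ - 2) = K₁ / 2 * s ^ (γ₁ - 1) / s := hdiv.symm
          _ ≤ P' s / s := by gcongr
    have step2 : (∫ s in Set.Ioc s₀ ρ, K₁ / 2 * s ^ (γ₁ - 2))
        = K₁ / 2 * ((ρ ^ (γ₁ - 1) - s₀ ^ (γ₁ - 1)) / (γ₁ - 1)) := by
      rw [← intervalIntegral.integral_of_le hs₀ρ, intervalIntegral.integral_const_mul,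
        integral_rpow (Or.inl (by linarith)), show γ₁ - 2 + 1 = γ₁ - 1 by ring]
    have step3 : PhiD P' ρ = PhiD P' s₀ + ∫ s in Set.Ioc s₀ ρ, P' s / s :=
      hsplit s₀ ρ hs₀pos.le hs₀ρ
    have hPhis₀ : 0 ≤ PhiD P' s₀ := hnn 0 s₀ le_rfl
    have h2s := hpow2 ρ hρ
    have hfinal : b * ρ ^ (γ₁ - 1) ≤ K₁ / 2 * ((ρ ^ (γ₁ - 1) - s₀ ^ (γ₁ - 1)) / (γ₁ - 1)) := by
      have hne : (γ₁ - 1) ≠ 0 := ne_of_gt hγ₁1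
      have e : b * ρ ^ (γ₁ - 1) = K₁ / 2 * ((ρ ^ (γ₁ - 1) / 2) / (γ₁ - 1)) := by
        rw [hb]
        field_simp
        ring
      rw [e]
      gcongr
      linarith
    linarith [step1, step2.symm.le, step3.symm.le, hPhis₀, hfinal]
  -- choose N₂ and C
  have hPhiρ₁nn : 0 ≤ PhiD P' ρ₁ := hnn 0 ρ₁ le_rfl
  refine ⟨PhiD P' ρ₁ + 1, by linarith, 2 / K₁ * (1 / b) ^ α, by positivity, ?_⟩
  intro y hy
  have hy0 : 0 < y := lt_of_le_of_lt (by linarith) hy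
  obtain ⟨hρ0, hρy⟩ := hinv y hy0.le
  set ρ : ℝ := invPhi y with hρdef
  -- ρ ≥ ρ₁
  have hρρ₁ : ρ₁ ≤ ρ := by
    by_contra hcon
    push_neg at hcon
    have := hmono ρ ρ₁ hρ0 hcon.le
    rw [hρy] at this
    linarith
  have hρpos : 0 < ρ := lt_of_lt_of_le hρ₁pos hρρ₁
  have hP'ρ : K₁ / 2 * ρ ^ (γ₁ - 1) ≤ P' ρ := key ρ (le_trans hρ₁s₀ hρρ₁)
  have hP'ρpos : 0 < P' ρ := hP'pos ρ hρpos
  -- ρ^(γ₁-1) ≤ y/b and hence ρ^(2-γ₁) ≤ (1/b)^α * y^α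
  have hyb : ρ ^ (γ₁ - 1) ≤ 1 / b * y := by
    have := hlower ρ hρρ₁
    rw [hρy] at this
    rw [div_mul_eq_mul_div, one_mul, le_div_iff₀ hbpos, mul_comm]
    exact this
  have hρ2γ : ρ ^ (2 - γ₁) ≤ (1 / b) ^ α * y ^ α := by
    have h1 : (ρ ^ (γ₁ - 1)) ^ α ≤ (1 / b * y) ^ α :=
      Real.rpow_le_rpow (Real.rpow_nonneg hρpos.le _) hyb hαpos.le
    rw [← Real.rpow_mul hρpos.le] at h1
    rw [show (γ₁ - 1) * α = 2 - γ₁ by rw [hα, mul_comm, div_mul_cancel₀ _ (ne_of_gt hγ₁1)]] at h1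
    rwa [Real.mul_rpow (by positivity) hy0.le] at h1
  -- conclude
  rw [one_div_div]
  have hstep : ρ / P' ρ ≤ 2 / K₁ * ρ ^ (2 - γ₁) := by
    have hden : 0 < K₁ / 2 * ρ ^ (γ₁ - 1) := by positivity
    have epow : ρ ^ (2 - γ₁) * ρ ^ (γ₁ - 1) = ρ := by
      rw [← Real.rpow_add hρpos, show 2 - γ₁ + (γ₁ - 1) = 1 by ring, Real.rpow_one]
    have hK : 2 / K₁ * (K₁ / 2) = 1 := by field_simp
    calc ρ / P' ρ ≤ ρ / (K₁ / 2 * ρ ^ (γ₁ - 1)) := by gcongr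
      _ = 2 / K₁ * ρ ^ (2 - γ₁) := by
          rw [div_eq_iff (ne_of_gt hden),
            show 2 / K₁ * ρ ^ (2 - γ₁) * (K₁ / 2 * ρ ^ (γ₁ - 1))
              = ρ ^ (2 - γ₁) * ρ ^ (γ₁ - 1) * (2 / K₁ * (K₁ / 2)) from by ring,
            epow, hK, mul_one]

  calc ρ / P' ρ ≤ 2 / K₁ * ρ ^ (2 - γ₁) := hstep
    _ ≤ 2 / K₁ * ((1 / b) ^ α * y ^ α) := by gcongr
    _ = 2 / K₁ * (1 / b) ^ α * y ^ α := by ring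
end
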